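/- arXiv:math/0402111 — 2 statements merged into one kernel-verified Lean document; each statement's English description precedes it below -/
import Mathlib

section
/- Let x be the nilpotent k×k Jordan block matrix (single Jordan block, eigenvalue 0) over a field of characteristic zero. Then the Lie subalgebra of gl_k generated by x together with its transpose xᵀ acts irreducibly on K^k. -/
attribute [local instance] LieRing.ofAssociativeRing

/-!
If `W ≠ 0` is stable under the Jordan block `x` and its transpose, pick `v ∈ W` and let `p` be
its last nonzero coordinate. Since `x` shifts coordinates up, `x ^ p v` is a nonzero multiple of
the first standard basis vector `e₀`, so `e₀ ∈ W`; since `xᵀ` maps `eₙ` to `eₙ₊₁`, all of the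
standard basis lies in `W`.
-/

open Matrix

theorem Matrix.pow_mulVec_mem {n R : Type*} [Fintype n] [DecidableEq n] [Semiring R]
    {W : Submodule R (n → R)} {A : Matrix n n R} (hA : ∀ v ∈ W, A *ᵥ v ∈ W) (m : ℕ)
    {v : n → R} (hv : v ∈ W) : (A ^ m) *ᵥ v ∈ W := by
  induction m with
  | zero => simpa using hv
  | succ m ih => simpa [pow_succ', ← mulVec_mulVec] using hA _ ih

theorem Submodule.eq_top_of_forall_single_one_mem {ι R : Type*} [Finite ι] [DecidableEq ι]
    [Semiring R] {W : Submodule R (ι → R)} (hW : ∀ i, Pi.single i 1 ∈ W) : W = ⊤ :=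
  eq_top_iff.2 <| (Pi.basisFun R ι).span_eq ▸ Submodule.span_le.2 <| by
    rintro _ ⟨i, rfl⟩
    simpa using hW i

def nilpotentJordanBlock (R : Type*) [Zero R] [One R] (k : ℕ) : Matrix (Fin k) (Fin k) R :=
  Matrix.of fun i j : Fin k => if (i : ℕ) + 1 = (j : ℕ) then (1 : R) else 0

namespace nilpotentJordanBlock

variable {R : Type*} [Semiring R] {k : ℕ}

theorem mulVec_apply (v : Fin k → R) (i : Fin k) :
    (nilpotentJordanBlock R k *ᵥ v) i = if h : (i : ℕ) + 1 < k then v ⟨i + 1, h⟩ else 0 := by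
  simp only [nilpotentJordanBlock, mulVec, dotProduct, of_apply, ite_mul, one_mul, zero_mul]
  split_ifs with h
  · have hj (j : Fin k) : (i : ℕ) + 1 = j ↔ j = ⟨i + 1, h⟩ := by rw [Fin.ext_iff, eq_comm]
    simp_rw [hj, Finset.sum_ite_eq', Finset.mem_univ, if_true]
  · exact Finset.sum_eq_zero fun j _ => if_neg fun hj : (i : ℕ) + 1 = j => h (hj ▸ j.isLt)

theorem pow_mulVec_apply (m : ℕ) (v : Fin k → R) (i : Fin k) :
    (nilpotentJordanBlock R k ^ m *ᵥ v) i = if h : (i : ℕ) + m < k then v ⟨i + m, h⟩ else 0 := by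
  induction m generalizing i with
  | zero => simp
  | succ m ih =>
    rw [pow_succ', ← mulVec_mulVec, mulVec_apply]
    split_ifs with h₁ h₂ h₂
    · simp [ih, h₂, add_assoc, add_comm 1 m]
    · rw [ih, dif_neg (by simp; omega)]
    · omega
    · rfl

theorem transpose_mulVec_single {n : ℕ} (h : n + 1 < k) (c : R) :
    (nilpotentJordanBlock R k)ᵀ *ᵥ Pi.single ⟨n, by omega⟩ c = Pi.single ⟨n + 1, h⟩ c := by
  ext i
  simp [nilpotentJordanBlock, Pi.single_apply, Fin.ext_iff, eq_comm]

theorem pow_mulVec_eq_single {p : Fin k} {v : Fin k → R} (hv : ∀ i, p < i → v i = 0) :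
    nilpotentJordanBlock R k ^ (p : ℕ) *ᵥ v = Pi.single ⟨0, p.pos⟩ (v p) := by
  ext i
  rw [pow_mulVec_apply, Pi.single_apply]
  rcases Nat.eq_zero_or_pos i with hi | hi
  · rw [dif_pos (by omega), if_pos (Fin.ext hi)]
    simp [hi]
  · rw [if_neg (by simp [Fin.ext_iff]; omega)]
    split_ifs with h
    · exact hv _ (by simp [Fin.lt_def]; omega)
    · rfl

theorem single_mem_of_single_zero_mem {W : Submodule R (Fin k → R)}
    (hW : ∀ v ∈ W, (nilpotentJordanBlock R k)ᵀ *ᵥ v ∈ W) {h₀ : 0 < k}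
    (h : Pi.single ⟨0, h₀⟩ 1 ∈ W) (n : ℕ) (hn : n < k) : Pi.single ⟨n, hn⟩ 1 ∈ W := by
  induction n with
  | zero => exact h
  | succ n ih => simpa [transpose_mulVec_single hn] using hW _ (ih (by omega))

theorem exists_single_zero_mem {K : Type*} [Field K] {W : Submodule K (Fin k → K)}
    (hW : ∀ v ∈ W, nilpotentJordanBlock K k *ᵥ v ∈ W) (hW₀ : W ≠ ⊥) :
    ∃ h₀ : 0 < k, Pi.single ⟨0, h₀⟩ 1 ∈ W := by
  classical
  obtain ⟨v, hvW, hv⟩ := Submodule.exists_mem_ne_zero_of_ne_bot hW₀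
  obtain ⟨p, hp, hp_max⟩ := (Finset.univ.filter (v · ≠ 0)).exists_max_image id
    (by simpa [Finset.filter_nonempty_iff, funext_iff] using hv)
  have hvp : v p ≠ 0 := by simpa using hp
  have hv_eq : ∀ i, p < i → v i = 0 := fun i hi => by
    by_contra h
    exact (hp_max i (by simpa using h)).not_gt hi
  refine ⟨p.pos, ?_⟩
  have := W.smul_mem (v p)⁻¹ (Matrix.pow_mulVec_mem hW p hvW)
  rwa [pow_mulVec_eq_single hv_eq, ← Pi.single_smul', smul_eq_mul, inv_mul_cancel₀ hvp] at this

end nilpotentJordanBlock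

theorem jordan_block_and_transpose_irreducible_general
    (K : Type*) [Field K]
    (k : ℕ)
    (x : Matrix (Fin k) (Fin k) K)
    (hx : x = Matrix.of fun i j : Fin k => if (i : ℕ) + 1 = (j : ℕ) then (1 : K) else 0) :
    ∀ W : Submodule K (Fin k → K),
      (∀ m ∈ LieSubalgebra.lieSpan K (Matrix (Fin k) (Fin k) K) {x, x.transpose},
        ∀ v ∈ W, m.mulVec v ∈ W) →
      W = ⊥ ∨ W = ⊤ := by
  obtain rfl : x = nilpotentJordanBlock K k := hx
  intro W hW
  have hN := hW _ (LieSubalgebra.subset_lieSpan (Set.mem_insert _ _))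
  have hNt := hW _ (LieSubalgebra.subset_lieSpan (Set.mem_insert_of_mem _ rfl))
  refine or_iff_not_imp_left.2 fun hW₀ => ?_
  obtain ⟨h₀, hsingle⟩ := nilpotentJordanBlock.exists_single_zero_mem hN hW₀
  exact Submodule.eq_top_of_forall_single_one_mem fun i =>
    nilpotentJordanBlock.single_mem_of_single_zero_mem hNt hsingle i i.isLt

/-- The Lie subalgebra of `gl_k` generated by the nilpotent Jordan block `x` and its
transpose acts irreducibly on `K^k`. -/
theorem jordan_block_and_transpose_irreducible
    (K : Type*) [Field K] [CharZero K]
    (k : ℕ) (hk : 1 ≤ k)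
    (x : Matrix (Fin k) (Fin k) K)
    (hx : x = Matrix.of fun i j : Fin k => if (i : ℕ) + 1 = (j : ℕ) then (1 : K) else 0) :
    ∀ W : Submodule K (Fin k → K),
      (∀ m ∈ LieSubalgebra.lieSpan K (Matrix (Fin k) (Fin k) K) {x, x.transpose},
        ∀ v ∈ W, m.mulVec v ∈ W) →
      W = ⊥ ∨ W = ⊤ :=
  jordan_block_and_transpose_irreducible_general K k x hx
end

section
/- Let V be a finite-dimensional representation of sl₂ over an algebraically closed field of characteristic zero on which the standard nilpotent e acts with a single Jordan block (e^{dim V - 1} ≠ 0). Then V is irreducible as an sl₂-representation, hence isomorphic to Sym^{dim V - 1} of the standard representation. -/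
open LieAlgebra.SpecialLinear

attribute [local instance 100] LieRing.ofAssociativeRing

section Aux

lemma aux_nilpotent {K V : Type*} [Field K] [CharZero K] [AddCommGroup V] [Module K V]
    [FiniteDimensional K V] (H E : Module.End K V) (hHE : H * E - E * H = (2:K) • E) :
    IsNilpotent E := by
  by_contra hE
  have hpow : ∀ k : ℕ, E ^ k ≠ 0 := fun k hk => hE ⟨k, hk⟩
  let δ : Module.End K (Module.End K V) :=
    LinearMap.mulLeft K H - LinearMap.mulRight K H
  have hδ : ∀ k : ℕ, δ (E ^ k) = ((2 * k : ℕ) : K) • (E ^ k) := by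
    intro k
    induction k with
    | zero => simp [δ]
    | succ k ih =>
      have : δ (E ^ (k+1)) = E * δ (E ^ k) + (H * E - E * H) * E ^ k := by
        simp only [δ, LinearMap.sub_apply, LinearMap.mulLeft_apply, LinearMap.mulRight_apply,
          pow_succ']
        noncomm_ring
      rw [this, ih, hHE]
      rw [mul_smul_comm, smul_mul_assoc, ← pow_succ', ← add_smul]
      congr 1
      push_cast
      ring
  have hev : ∀ k : ℕ, Module.End.HasEigenvector δ ((2 * k : ℕ) : K) (E ^ k) := by
    intro k
    exact ⟨Module.End.mem_eigenspace_iff.mpr (hδ k), hpow k⟩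
  have hinj : Function.Injective (fun k : ℕ => ((2 * k : ℕ) : K)) := by
    intro a b hab
    simpa using Nat.cast_injective hab
  have hli : LinearIndependent K (fun k : ℕ => E ^ k) :=
    Module.End.eigenvectors_linearIndependent' δ _ hinj _ hev
  have := hli.comp (fun i : Fin (Module.finrank K (Module.End K V) + 1) => (i : ℕ))
    (fun a b hab => Fin.ext hab)
  have hcard := this.fintype_card_le_finrank
  simp at hcard

lemma aux_pow_finrank {K V : Type*} [Field K] [AddCommGroup V] [Module K V]
    [FiniteDimensional K V] {E : Module.End K V} (h : IsNilpotent E) :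
    E ^ Module.finrank K V = 0 := by
  have h1 := h.charpoly_eq_X_pow_finrank
  have h2 := E.aeval_self_charpoly
  rw [h1] at h2
  simpa using h2

lemma aux_indep {K V : Type*} [Field K] [AddCommGroup V] [Module K V]
    {n : ℕ} {E : Module.End K V} (hEn : E ^ n = 0) {v : V} (hv : (E ^ (n-1)) v ≠ 0)
    (hn : 1 ≤ n) :
    LinearIndependent K (fun i : Fin n => (E ^ (i : ℕ)) v) := by
  have hbig : ∀ t : ℕ, n ≤ t → E ^ t = 0 := fun t ht => pow_eq_zero_of_le ht hEn
  rw [Fintype.linearIndependent_iff]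
  intro g hg
  suffices H : ∀ t : ℕ, ∀ i : Fin n, (i : ℕ) = t → g i = 0 by
    exact fun i => H i i rfl
  intro t
  induction t using Nat.strong_induction_on with
  | _ t ih =>
    intro i hi
    have happ := congrArg (fun u => (E ^ (n - 1 - t)) u) hg
    simp only [map_sum, map_smul, map_zero] at happ
    have hsingle : ∀ j : Fin n, j ∈ Finset.univ → j ≠ i →
        g j • (E ^ (n-1-t)) ((E ^ (j : ℕ)) v) = 0 := by
      intro j _ hj
      rcases lt_or_gt_of_ne (fun hc : (j:ℕ) = (i:ℕ) => hj (Fin.ext hc)) with hlt | hgt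
      · rw [ih (j : ℕ) (hi ▸ hlt) j rfl, zero_smul]
      · have : (E ^ (n-1-t)) ((E ^ (j : ℕ)) v) = 0 := by
          rw [← Module.End.mul_apply, ← pow_add, hbig _ (by omega)]
          rfl
        rw [this, smul_zero]
    rw [Finset.sum_eq_single_of_mem i (Finset.mem_univ i) hsingle] at happ
    rw [← Module.End.mul_apply, ← pow_add] at happ
    have hexp : n - 1 - t + (i : ℕ) = n - 1 := by omega
    rw [hexp] at happ
    exact (smul_eq_zero.mp happ).resolve_right hv

end Aux

/-- A finite-dimensional representation of `sl₂` on which the standard nilpotent `e`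
acts with a single Jordan block is irreducible. -/
theorem sl2_rep_single_block_irreducible
    (K : Type*) [Field K] [IsAlgClosed K] [CharZero K]
    (V : Type*) [AddCommGroup V] [Module K V] [FiniteDimensional K V]
    [LieRingModule (sl (Fin 2) K) V] [LieModule K (sl (Fin 2) K) V]
    (e : sl (Fin 2) K) (he : (e : Matrix (Fin 2) (Fin 2) K) = !![0, 1; 0, 0])
    (hblock : (LieModule.toEnd K (sl (Fin 2) K) V e) ^ (Module.finrank K V - 1) ≠ 0) :
    LieModule.IsIrreducible K (sl (Fin 2) K) V := by
  classical
  -- the sl₂-triple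
  have hmemh : (!![1,0;0,-1] : Matrix (Fin 2) (Fin 2) K) ∈ sl (Fin 2) K := by
    show _ ∈ LinearMap.ker (Matrix.traceLinearMap (Fin 2) K K)
    simp [Matrix.trace_fin_two]
  have hmemf : (!![0,0;1,0] : Matrix (Fin 2) (Fin 2) K) ∈ sl (Fin 2) K := by
    show _ ∈ LinearMap.ker (Matrix.traceLinearMap (Fin 2) K K)
    simp [Matrix.trace_fin_two]
  set hh : sl (Fin 2) K := ⟨_, hmemh⟩ with hhdef
  set ff : sl (Fin 2) K := ⟨_, hmemf⟩ with ffdef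
  have hbrHE : ⁅hh, e⁆ = (2:K) • e := by
    ext : 1
    have hs : (((2:K) • e : sl (Fin 2) K) : Matrix (Fin 2) (Fin 2) K)
        = (2:K) • (e : Matrix (Fin 2) (Fin 2) K) := rfl
    rw [LieSubalgebra.coe_bracket, hs, Ring.lie_def, he]
    show (!![1,0;0,-1] : Matrix (Fin 2) (Fin 2) K) * _ - _ = _
    ext i j
    fin_cases i <;> fin_cases j <;> norm_num [Matrix.mul_apply, Fin.sum_univ_two, hhdef]
  have hbrEF : ⁅e, ff⁆ = hh := by
    ext : 1
    rw [LieSubalgebra.coe_bracket, Ring.lie_def, he]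
    show _ * (!![0,0;1,0] : Matrix (Fin 2) (Fin 2) K) - _ = !![1,0;0,-1]
    ext i j
    fin_cases i <;> fin_cases j <;> norm_num [Matrix.mul_apply, Fin.sum_univ_two, ffdef]
  set E : Module.End K V := LieModule.toEnd K (sl (Fin 2) K) V e with hEdef
  set Hop : Module.End K V := LieModule.toEnd K (sl (Fin 2) K) V hh with hHdef
  set F : Module.End K V := LieModule.toEnd K (sl (Fin 2) K) V ff with hFdef
  have hHE : Hop * E - E * Hop = (2:K) • E := by
    have h1 := (LieModule.toEnd K (sl (Fin 2) K) V).map_lie (x := hh) (y := e)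
    rw [hbrHE, map_smul] at h1
    rw [← hEdef, ← hHdef] at h1
    rw [Ring.lie_def] at h1
    rw [← h1]
  have hEF : E * F - F * E = Hop := by
    have h1 := (LieModule.toEnd K (sl (Fin 2) K) V).map_lie (x := e) (y := ff)
    rw [hbrEF] at h1
    rw [← hEdef, ← hFdef, ← hHdef] at h1
    rw [Ring.lie_def] at h1
    rw [h1]
  set n : ℕ := Module.finrank K V with hndef
  obtain ⟨v, hv⟩ : ∃ v : V, (E ^ (n-1)) v ≠ 0 := by
    by_contra hc
    push_neg at hc
    exact hblock (LinearMap.ext hc)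
  have hv0 : v ≠ 0 := by
    intro h
    exact hv (by rw [h, map_zero])
  have : Nontrivial V := ⟨v, 0, hv0⟩
  have hn : 1 ≤ n := Module.finrank_pos
  have hnilp : IsNilpotent E := aux_nilpotent Hop E hHE
  have hEn : E ^ n = 0 := aux_pow_finrank hnilp
  have hbig : ∀ t : ℕ, n ≤ t → E ^ t = 0 := fun t ht => pow_eq_zero_of_le ht hEn
  have li : LinearIndependent K (fun i : Fin n => (E ^ (i : ℕ)) v) := aux_indep hEn hv hn
  have hNe : Nonempty (Fin n) := ⟨⟨0, by omega⟩⟩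
  set b : Module.Basis (Fin n) K V :=
    basisOfLinearIndependentOfCardEqFinrank li (by simp [hndef]) with hbdef
  have hb : ∀ i : Fin n, b i = (E ^ (i : ℕ)) v := fun i => by
    rw [hbdef]
    exact congrFun (coe_basisOfLinearIndependentOfCardEqFinrank li (by simp [hndef])) i
  have hEt : ∀ (t : ℕ) (ht : t < n), (E ^ t) v = b ⟨t, ht⟩ := by
    intro t ht
    rw [hb ⟨t, ht⟩]
  -- commutation relations
  obtain ⟨z0, hz0⟩ : ∃ z : Fin n, (z:ℕ) = 0 := ⟨⟨0, by omega⟩, rfl⟩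
  have hHE1 : Hop * E = E * Hop + (2:K) • E := by
    rw [← hHE]; abel
  have hFE1 : F * E = E * F - Hop := by
    rw [← hEF]; abel
  have hHEk : ∀ k : ℕ, Hop * E ^ k = E ^ k * Hop + ((2*k:ℕ):K) • E ^ k := by
    intro k
    induction k with
    | zero => simp
    | succ k ih =>
      have h1 : Hop * E ^ (k+1) = (Hop * E ^ k) * E := by
        rw [pow_succ, mul_assoc]
      rw [h1, ih, add_mul, smul_mul_assoc, mul_assoc, hHE1, mul_add, ← pow_succ,
        mul_smul_comm, ← pow_succ]
      rw [add_assoc, ← add_smul]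
      congr 1
      push_cast
      ring
  have hFEk : ∀ k : ℕ, F * E ^ (k+1)
      = E ^ (k+1) * F - ((k:K)+1) • (E ^ k * Hop) - (((k:K)+1)*(k:K)) • E ^ k := by
    intro k
    induction k with
    | zero =>
      simp only [pow_one, pow_zero, Nat.cast_zero, zero_add, one_smul, mul_zero, zero_smul,
        sub_zero, one_mul]
      rw [hFE1]
    | succ k ih =>
      have h1 : F * E ^ (k+2) = (F * E ^ (k+1)) * E := by
        rw [pow_succ, mul_assoc]
      rw [h1, ih]
      rw [sub_mul, sub_mul, smul_mul_assoc, smul_mul_assoc, mul_assoc, mul_assoc, hFE1, hHE1]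
      rw [mul_sub, mul_add, ← mul_assoc, ← pow_succ, mul_smul_comm, ← pow_succ]
      rw [← mul_assoc, ← pow_succ]
      push_cast
      match_scalars <;> ring
  -- the trace of Hop vanishes
  have htr : LinearMap.trace K V Hop = 0 := by
    rw [← hEF, map_sub, LinearMap.trace_mul_comm, sub_self]
  -- coefficient extraction
  have hcoeff : ∀ (j : Fin n) (u : V), b.repr ((E ^ (j:ℕ)) u) j = b.repr u z0 := by
    intro j
    have key : (Finsupp.lapply j : (Fin n →₀ K) →ₗ[K] K) ∘ₗ (b.repr : V →ₗ[K] (Fin n →₀ K))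
          ∘ₗ (E ^ (j:ℕ))
        = (Finsupp.lapply z0 : (Fin n →₀ K) →ₗ[K] K)
          ∘ₗ (b.repr : V →ₗ[K] (Fin n →₀ K)) := by
      apply b.ext
      intro i
      simp only [LinearMap.comp_apply, LinearEquiv.coe_coe, Finsupp.lapply_apply]
      rw [Module.Basis.repr_self, Finsupp.single_apply]
      rw [hb i, ← Module.End.mul_apply, ← pow_add]
      by_cases hi0 : i = z0
      · rw [if_pos hi0]
        have hz : (j:ℕ) + (i:ℕ) = (j:ℕ) := by
          rw [hi0, hz0]
          omega
        rw [hz, hEt (j:ℕ) j.isLt, Module.Basis.repr_self, Finsupp.single_apply, if_pos]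
        exact Fin.ext rfl
      · rw [if_neg hi0]
        have hi1 : 1 ≤ (i:ℕ) := by
          rcases Nat.eq_zero_or_pos (i:ℕ) with h | h
          · exact absurd (Fin.ext (by rw [hz0]; exact h)) hi0
          · exact h
        by_cases hlt : (j:ℕ) + (i:ℕ) < n
        · rw [hEt _ hlt, Module.Basis.repr_self, Finsupp.single_apply, if_neg]
          intro hc
          have : (j:ℕ) + (i:ℕ) = (j:ℕ) := by
            simpa [Fin.ext_iff] using hc
          omega
        · rw [hbig _ (by omega)]
          simp
    intro u
    have := congrArg (fun φ => φ u) key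
    simpa using this
  set d0 : K := b.repr (Hop v) z0 with hd0def
  have hdiag : ∀ j : Fin n, b.repr (Hop (b j)) j = d0 + 2*(j:K) := by
    intro j
    rw [hb j]
    have h1 : Hop ((E ^ (j:ℕ)) v) = (E ^ (j:ℕ)) (Hop v) + ((2*(j:ℕ):ℕ):K) • (E ^ (j:ℕ)) v := by
      have := congrArg (fun T : Module.End K V => T v) (hHEk (j:ℕ))
      simpa using this
    rw [h1, map_add, map_smul, Finsupp.add_apply, Finsupp.smul_apply, hcoeff j (Hop v),
      hEt (j:ℕ) j.isLt, Module.Basis.repr_self]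
    rw [show (⟨(j:ℕ), j.isLt⟩ : Fin n) = j from Fin.ext rfl, Finsupp.single_apply, if_pos rfl]
    push_cast
    simp only [smul_eq_mul]
    ring
  -- compute d0 from the trace
  have hd0 : d0 = 1 - (n:K) := by
    have h1 : LinearMap.trace K V Hop = ∑ j : Fin n, b.repr (Hop (b j)) j := by
      rw [LinearMap.trace_eq_matrix_trace K b Hop]
      simp [Matrix.trace, Matrix.diag_apply, LinearMap.toMatrix_apply]
    have h2 : (0:K) = ∑ j : Fin n, (d0 + 2*(j:K)) := by
      rw [← htr, h1]
      exact Finset.sum_congr rfl fun j _ => hdiag j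
    rw [Finset.sum_add_distrib, Finset.sum_const, Finset.card_univ, Fintype.card_fin,
      nsmul_eq_mul] at h2
    have h3 : ∑ j : Fin n, 2*(j:K) = (n:K) * ((n:K) - 1) := by
      rw [← Finset.mul_sum]
      have h4 : ∑ j : Fin n, ((j:ℕ):K) = ∑ j ∈ Finset.range n, (j:K) :=
        Fin.sum_univ_eq_sum_range (fun j => ((j:ℕ):K)) n
      rw [h4]
      have h6 : ((∑ j ∈ Finset.range n, j) * 2 : ℕ) = ((n * (n-1) : ℕ)) := by
        rw [Finset.sum_range_id_mul_two n]
      have h7 := congrArg (fun m : ℕ => (m : K)) h6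
      push_cast [Nat.cast_sub hn] at h7
      linear_combination h7
    rw [h3] at h2
    have hn0 : (n:K) ≠ 0 := Nat.cast_ne_zero.mpr (by omega)
    have h9 : (n:K) * (d0 - (1 - (n:K))) = 0 := by linear_combination -h2
    rcases mul_eq_zero.mp h9 with hc | hc
    · exact absurd hc hn0
    · linear_combination hc
  -- now prove irreducibility
  have hNontriv : Nontrivial (LieSubmodule K (sl (Fin 2) K) V) := by
    refine ⟨⊥, ⊤, fun hc => ?_⟩
    have : v ∈ (⊥ : LieSubmodule K (sl (Fin 2) K) V) := by
      rw [hc]; trivial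
    rw [LieSubmodule.mem_bot] at this
    exact hv0 this
  refine ⟨fun N => ?_⟩
  by_cases hNbot : N = ⊥
  · left; exact hNbot
  right
  -- membership helpers
  have hEmem : ∀ x ∈ N, E x ∈ N := by
    intro x hx
    have : E x = ⁅e, x⁆ := rfl
    rw [this]
    exact N.lie_mem hx
  have hFmem : ∀ x ∈ N, F x ∈ N := by
    intro x hx
    have : F x = ⁅ff, x⁆ := rfl
    rw [this]
    exact N.lie_mem hx
  have hpow_mem : ∀ (s : ℕ), ∀ x ∈ N, (E ^ s) x ∈ N := by
    intro s
    induction s with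
    | zero => intro x hx; simpa using hx
    | succ s ih =>
      intro x hx
      rw [pow_succ, Module.End.mul_apply]
      exact ih _ (hEmem x hx)
  -- the top vector lies in N
  have htop : (E ^ (n-1)) v ∈ N := by
    obtain ⟨w, hwN, hw0⟩ : ∃ w ∈ N, w ≠ 0 := by
      by_contra hc
      push_neg at hc
      exact hNbot (by
        rw [LieSubmodule.eq_bot_iff]
        exact hc)
    set c := b.repr w with hcdef
    have hcne : c ≠ 0 := by
      intro h
      apply hw0
      have := congrArg (fun x => b.repr.symm x) h
      simpa [hcdef] using this
    have hsupp : c.support.Nonempty := Finsupp.support_nonempty_iff.mpr hcne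
    set m₀ : Fin n := c.support.min' hsupp with hm₀def
    have hm₀mem : m₀ ∈ c.support := c.support.min'_mem hsupp
    have hcm₀ : c m₀ ≠ 0 := Finsupp.mem_support_iff.mp hm₀mem
    have hwrepr : w = ∑ i : Fin n, c i • b i := (b.sum_repr w).symm
    have happ : (E ^ (n-1-(m₀:ℕ))) w = c m₀ • (E ^ (n-1)) v := by
      rw [hwrepr, map_sum]
      rw [Finset.sum_eq_single_of_mem m₀ (Finset.mem_univ m₀)]
      · rw [map_smul, hb m₀, ← Module.End.mul_apply, ← pow_add]
        have hlt : (m₀:ℕ) < n := m₀.isLt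
        rw [show n-1-(m₀:ℕ)+(m₀:ℕ) = n-1 by omega]
      · intro j _ hj
        rw [map_smul, hb j, ← Module.End.mul_apply, ← pow_add]
        by_cases hjlt : (j:ℕ) < (m₀:ℕ)
        · have : j ∉ c.support := by
            intro hc
            have := c.support.min'_le j hc
            rw [← hm₀def] at this
            exact absurd (lt_of_lt_of_le hjlt this) (lt_irrefl _)
          rw [Finsupp.notMem_support_iff.mp this, zero_smul]
        · have hjgt : (m₀:ℕ) < (j:ℕ) := by
            rcases lt_trichotomy (m₀:ℕ) (j:ℕ) with h | h | h
            · exact h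
            · exact absurd (Fin.ext h) (Ne.symm hj)
            · exact absurd h hjlt
          rw [hbig (n-1-(m₀:ℕ) + (j:ℕ)) (by omega)]
          simp
    have := hpow_mem (n-1-(m₀:ℕ)) w hwN
    rw [happ] at this
    have h2 := N.smul_mem ((c m₀)⁻¹) this
    rwa [smul_smul, inv_mul_cancel₀ hcm₀, one_smul] at h2
  -- minimal degree
  set S : Set ℕ := {k : ℕ | k < n ∧ (E ^ k) v ∈ N} with hSdef
  have hSne : S.Nonempty := ⟨n-1, by omega, htop⟩
  set m : ℕ := sInf S with hmdef
  have hmS : m ∈ S := Nat.sInf_mem hSne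
  have hmlt : m < n := hmS.1
  have hmmem : (E ^ m) v ∈ N := hmS.2
  have hmin : ∀ k, k < m → k ∉ S := fun k hk => Nat.notMem_of_lt_sInf hk
  -- all sufficiently deep vectors are in N
  have hhigh : ∀ u : V, (E ^ m) u ∈ N := by
    intro u
    rw [← b.sum_repr u, map_sum]
    refine N.toSubmodule.sum_mem fun i _ => ?_
    rw [map_smul]
    refine N.toSubmodule.smul_mem _ ?_
    show (E ^ m) (b i) ∈ N
    rw [hb i, ← Module.End.mul_apply, ← pow_add, add_comm, pow_add, Module.End.mul_apply]
    exact hpow_mem _ _ hmmem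
  -- if m = 0 then N = ⊤
  rcases Nat.eq_zero_or_pos m with hm0 | hmpos
  · rw [← LieSubmodule.toSubmodule_eq_top, Submodule.eq_top_iff']
    intro x
    have hx := hhigh x
    rw [hm0, pow_zero, Module.End.one_apply] at hx
    exact hx
  -- otherwise derive a contradiction
  exfalso
  obtain ⟨j, hj⟩ : ∃ j, m = j + 1 := ⟨m - 1, by omega⟩
  -- N contains E^j (Hop v) - d0 • E^j v
  have hrest : (E ^ j) (Hop v) - d0 • (E ^ j) v ∈ N := by
    have hH : Hop v = ∑ i : Fin n, b.repr (Hop v) i • b i := (b.sum_repr (Hop v)).symm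
    have hsum : (E ^ j) (Hop v)
        = d0 • (E ^ j) v + ∑ i ∈ Finset.univ.erase z0,
            b.repr (Hop v) i • (E ^ j) (b i) := by
      conv_lhs => rw [hH]
      rw [map_sum, ← Finset.add_sum_erase _ _ (Finset.mem_univ z0)]
      congr 1
      · rw [map_smul, ← hd0def]
        congr 1
        rw [hb z0, hz0, pow_zero]
        rfl
      · exact Finset.sum_congr rfl fun i _ => map_smul _ _ _
    rw [hsum, add_sub_cancel_left]
    refine N.toSubmodule.sum_mem fun i hi => ?_
    rw [Finset.mem_erase] at hi
    refine N.toSubmodule.smul_mem _ ?_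
    show (E ^ j) (b i) ∈ N
    rw [hb i, ← Module.End.mul_apply, ← pow_add]
    have hi1 : 1 ≤ (i:ℕ) := by
      rcases Nat.eq_zero_or_pos (i:ℕ) with h | h
      · exact absurd (Fin.ext (by rw [hz0]; exact h)) hi.1
      · exact h
    have : j + (i:ℕ) = ((i:ℕ) - 1) + m := by omega
    rw [this, pow_add, Module.End.mul_apply]
    exact hpow_mem _ _ hmmem
  -- use the commutation relation
  have hcomb : (((j:K)+1) * (d0 + (j:K))) • (E ^ j) v ∈ N := by
    have hid := congrArg (fun T : Module.End K V => T v) (hFEk j)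
    simp only [LinearMap.sub_apply, LinearMap.smul_apply, Module.End.mul_apply] at hid
    -- hid : F (E^(j+1) v) = E^(j+1) (F v) - ((j:K)+1) • Hop... careful: (E^j * Hop) v = E^j (Hop v)
    have hin1 : F ((E ^ (j+1)) v) ∈ N := by
      apply hFmem
      rw [← hj]
      exact hmmem
    have hin2 : (E ^ (j+1)) (F v) ∈ N := by
      rw [← hj]
      exact hhigh (F v)
    have hstep : (((j:K)+1)) • ((E ^ j) (Hop v)) + (((j:K)+1)*(j:K)) • (E ^ j) v ∈ N := by
      have : (((j:K)+1)) • ((E ^ j) (Hop v)) + (((j:K)+1)*(j:K)) • (E ^ j) v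
          = (E ^ (j+1)) (F v) - F ((E ^ (j+1)) v) := by
        rw [hid]
        abel
      rw [this]
      exact N.sub_mem hin2 hin1
    have h2 : (((j:K)+1) * (d0 + (j:K))) • (E ^ j) v
        = ((((j:K)+1)) • ((E ^ j) (Hop v)) + (((j:K)+1)*(j:K)) • (E ^ j) v)
          - ((j:K)+1) • ((E ^ j) (Hop v) - d0 • (E ^ j) v) := by
      rw [smul_sub, smul_smul]
      match_scalars <;> ring
    rw [h2]
    exact N.sub_mem hstep (N.smul_mem _ hrest)
  have hcne : ((j:K)+1) * (d0 + (j:K)) ≠ 0 := by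
    rw [hd0]
    have h1 : ((j:K)+1) ≠ 0 := by
      have : ((j+1 : ℕ):K) ≠ 0 := Nat.cast_ne_zero.mpr (by omega)
      push_cast at this
      exact this
    have h2 : (1 - (n:K) + (j:K)) ≠ 0 := by
      intro hc
      have : ((j+1 : ℕ):K) = ((n:ℕ):K) := by
        push_cast
        linear_combination hc
      have := Nat.cast_injective (R := K) this
      omega
    exact mul_ne_zero h1 h2
  have : (E ^ j) v ∈ N := by
    have h2 := N.smul_mem (((j:K)+1) * (d0 + (j:K)))⁻¹ hcomb
    rwa [smul_smul, inv_mul_cancel₀ hcne, one_smul] at h2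
  exact hmin j (by omega) ⟨by omega, this⟩
end
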